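/- Let R be a commutative ring of characteristic p > 0 and D : R → R a derivation. Then the p-fold composite D^p is again a derivation of R. -/

import Mathlib

open Finset

lemma iterate_leibniz {R : Type*} [CommRing R] (D : Derivation ℤ R R) (n : ℕ) (p q : R) :
    (⇑D)^[n] (p * q) =
      ∑ k ∈ range n.succ, (n.choose k • ((⇑D)^[n - k] p * (⇑D)^[k] q)) := by
  induction n with
  | zero => simp [Finset.range]
  | succ n IH =>
    have hmul : ∀ a b : R, D (a * b) = a * D b + b * D a := fun a b =>
      by simp [smul_eq_mul, D.leibniz a b]
    calc
      (⇑D)^[n + 1] (p * q) =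
          D (∑ k ∈ range n.succ,
              n.choose k • ((⇑D)^[n - k] p * (⇑D)^[k] q)) := by
        rw [Function.iterate_succ_apply', IH]
      _ = (∑ k ∈ range n.succ,
            n.choose k • ((⇑D)^[n - k + 1] p * (⇑D)^[k] q)) +
          ∑ k ∈ range n.succ,
            n.choose k • ((⇑D)^[n - k] p * (⇑D)^[k + 1] q) := by
        rw [map_sum]
        simp_rw [map_nsmul, hmul, Function.iterate_succ_apply',
          smul_add, sum_add_distrib]
        ring_nf
        congr 1 <;> exact Finset.sum_congr rfl fun k _ => by ring_nf
      _ = (∑ k ∈ range n.succ,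
                n.choose k.succ • ((⇑D)^[n - k] p * (⇑D)^[k + 1] q)) +
              1 • ((⇑D)^[n + 1] p * (⇑D)^[0] q) +
            ∑ k ∈ range n.succ, n.choose k • ((⇑D)^[n - k] p * (⇑D)^[k + 1] q) :=
        ?_
      _ = ((∑ k ∈ range n.succ, n.choose k • ((⇑D)^[n - k] p * (⇑D)^[k + 1] q)) +
              ∑ k ∈ range n.succ,
                n.choose k.succ • ((⇑D)^[n - k] p * (⇑D)^[k + 1] q)) +
            1 • ((⇑D)^[n + 1] p * (⇑D)^[0] q) := by
        rw [add_comm, add_assoc]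
      _ = (∑ i ∈ range n.succ,
              (n + 1).choose (i + 1) • ((⇑D)^[n + 1 - (i + 1)] p * (⇑D)^[i + 1] q)) +
            1 • ((⇑D)^[n + 1] p * (⇑D)^[0] q) := by
        simp_rw [Nat.choose_succ_succ, Nat.succ_sub_succ, add_smul, sum_add_distrib]
      _ = ∑ k ∈ range n.succ.succ,
            n.succ.choose k • ((⇑D)^[n.succ - k] p * (⇑D)^[k] q) := by
        rw [sum_range_succ' _ n.succ, Nat.choose_zero_right, tsub_zero]
    congr
    refine (sum_range_succ' _ _).trans (congr_arg₂ (· + ·) ?_ ?_)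
    · rw [sum_range_succ, Nat.choose_succ_self, zero_smul, add_zero]
      refine sum_congr rfl fun k hk => ?_
      rw [mem_range] at hk
      congr
      omega
    · rw [Nat.choose_zero_right, tsub_zero]

/-- For a commutative ring `R` of prime characteristic `p` and a derivation
`D : R → R`, the p-fold composite `D^p` is again a derivation of `R`. -/
theorem iterate_p_derivation
    (R : Type*) [CommRing R] (p : ℕ) (hp : p.Prime) [CharP R p]
    (D : Derivation ℤ R R) :
    ∃ D' : Derivation ℤ R R, ⇑D' = (⇑D)^[p] := by
  have hpos : 0 < p := hp.pos
  refine ⟨Derivation.mk' ((D.toLinearMap)^p) (fun a b => ?_), ?_⟩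
  · have hcoe : ⇑((D.toLinearMap)^p) = (⇑D)^[p] := funext fun x => Module.End.pow_apply _ _ _
    simp only [hcoe, smul_eq_mul]
    obtain ⟨m, rfl⟩ : ∃ m, p = m + 1 := ⟨p - 1, by omega⟩
    rw [iterate_leibniz]
    rw [Nat.succ_eq_add_one, sum_range_succ, sum_range_succ']
    have hmid : ∑ k ∈ range m,
        ((m + 1).choose (k + 1)) • ((⇑D)^[m + 1 - (k + 1)] a * (⇑D)^[k + 1] b) = 0 := by
      refine Finset.sum_eq_zero fun k hk => ?_
      rw [mem_range] at hk
      obtain ⟨c, hc⟩ := hp.dvd_choose_self (Nat.succ_ne_zero k) (Nat.succ_lt_succ hk)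
      rw [hc, mul_smul, nsmul_eq_mul]
      norm_cast
      simp [CharP.cast_eq_zero R (m + 1)]
    rw [hmid]
    simp [mul_comm]
    ring
  · ext x
    exact Module.End.pow_apply _ _ _
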